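/- Let δ and β be reals with 0 ≤ δ ≤ β ≤ α. If there exists a feasible δ-path, then there exists a feasible β-path. -/
import Mathlib


/-- `PWLinSlope β a b g` : `g` is continuous piecewise-linear on `[a, b]`,
affine with slope `β` or `-β` on each interval of some finite partition of `[a, b]`. -/
def PWLinSlope (β a b : ℝ) (g : ℝ → ℝ) : Prop :=
  ∃ m : ℕ, ∃ s : ℕ → ℝ, s 0 = a ∧ s m = b ∧ (∀ k < m, s k < s (k + 1)) ∧
    ∀ k < m, ∃ σ : ℝ, (σ = β ∨ σ = -β) ∧
      ∀ x ∈ Set.Icc (s k) (s (k + 1)), g x = g (s k) + σ * (x - s k)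

/-- `Feasible a b L f β g` : `g` is a feasible `β`-path over `[a, b]` for the corridor of
half-width `L` around the α-path `f`. -/
def Feasible (a b L : ℝ) (f : ℝ → ℝ) (β : ℝ) (g : ℝ → ℝ) : Prop :=
  PWLinSlope β a b g ∧ ∀ x ∈ Set.Icc a b, |g x - f x| ≤ L

lemma seq_mono {m : ℕ} {s : ℕ → ℝ} (h : ∀ k < m, s k < s (k + 1)) :
    ∀ i j, i ≤ j → j ≤ m → s i ≤ s j := by
  intro i j hij hjm
  induction j with
  | zero => cases Nat.le_zero.mp hij; exact le_rfl
  | succ j ih =>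
    rcases Nat.eq_or_lt_of_le hij with rfl | hlt
    · exact le_rfl
    · exact le_trans (ih (Nat.lt_succ_iff.mp hlt) (le_of_lt (Nat.lt_of_succ_le hjm)))
        (le_of_lt (h j (Nat.lt_of_succ_le hjm)))

lemma aux_pwl (n : ℕ) (hn : 1 ≤ n) (t h : ℕ → ℝ) (L β : ℝ) (hβ : 0 ≤ β)
    (ht : ∀ i < n, t i < t (i + 1)) :
    PWLinSlope β (t 0) (t n)
      (fun x => (Finset.range (n + 1)).inf' ⟨0, by simp⟩
        (fun i => h i + L + β * |x - t i|)) := by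
  classical
  set g : ℝ → ℝ := fun x => (Finset.range (n + 1)).inf' ⟨0, by simp⟩
      (fun i => h i + L + β * |x - t i|) with hgdef
  have tmono : ∀ i j, i ≤ j → j ≤ n → t i ≤ t j := seq_mono ht
  have ht0n : t 0 < t n := by
    have h1 := ht (n - 1) (by omega)
    have h2 : n - 1 + 1 = n := by omega
    rw [h2] at h1
    exact lt_of_le_of_lt (tmono 0 (n - 1) (Nat.zero_le _) (by omega)) h1
  rcases eq_or_lt_of_le hβ with hβ0 | hβpos
  · -- β = 0 : g is constant
    have hconst : ∀ y : ℝ, g y = g (t 0) := by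
      intro y
      have he : ∀ z : ℝ, (fun i => h i + L + β * |z - t i|) = fun i => h i + L := by
        intro z; funext i; rw [← hβ0]; ring
      rw [hgdef]; simp only [he]
    refine ⟨1, fun k => if k = 0 then t 0 else t n, by simp, by simp, ?_, ?_⟩
    · intro k hk; interval_cases k; simpa using ht0n
    · intro k hk
      refine ⟨β, Or.inl rfl, fun x _ => ?_⟩
      rw [← hβ0]
      simp only [hconst]
      ring
  · -- β > 0
    set A : ℕ → ℝ := fun j => (Finset.range (j + 1)).inf' ⟨0, by simp⟩
        (fun i => h i + L - β * t i) with hA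
    set B : ℕ → ℝ := fun j => if hj : j + 1 ≤ n then
        (Finset.Icc (j + 1) n).inf' (Finset.nonempty_Icc.mpr hj)
          (fun i => h i + L + β * t i) else 0 with hB
    have hsplit : ∀ j, j < n → ∀ x, t j ≤ x → x ≤ t (j + 1) →
        g x = min (A j + β * x) (B j - β * x) := by
      intro j hj x hx1 hx2
      have hBj : B j = (Finset.Icc (j + 1) n).inf' (Finset.nonempty_Icc.mpr hj)
          (fun i => h i + L + β * t i) := by
        have hj' : j + 1 ≤ n := hj
        simp only [hB]; rw [dif_pos hj']
      apply le_antisymm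
      · apply le_min
        · obtain ⟨i, hi, hieq⟩ := Finset.exists_mem_eq_inf' (⟨0, by simp⟩ :
            (Finset.range (j + 1)).Nonempty) (fun i => h i + L - β * t i)
          have hij : i ≤ j := Nat.lt_succ_iff.mp (Finset.mem_range.mp hi)
          have hti : t i ≤ x := le_trans (tmono i j hij (le_of_lt hj)) hx1
          have hle : g x ≤ h i + L + β * |x - t i| := by
            rw [hgdef]
            exact Finset.inf'_le _ (Finset.mem_range.mpr (by omega))
          rw [abs_of_nonneg (by linarith)] at hle
          have hieq' : A j = h i + L - β * t i := by simp only [hA]; exact hieq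
          rw [hieq']; linarith
        · obtain ⟨i, hi, hieq⟩ := Finset.exists_mem_eq_inf'
            (Finset.nonempty_Icc.mpr (hj : j + 1 ≤ n)) (fun i => h i + L + β * t i)
          obtain ⟨hi1, hi2⟩ := Finset.mem_Icc.mp hi
          have hti : x ≤ t i := le_trans hx2 (tmono (j + 1) i hi1 hi2)
          have hle : g x ≤ h i + L + β * |x - t i| := by
            rw [hgdef]
            exact Finset.inf'_le _ (Finset.mem_range.mpr (by omega))
          rw [abs_of_nonpos (by linarith)] at hle
          have hieq' : B j = h i + L + β * t i := by rw [hBj]; exact hieq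
          rw [hieq']; linarith
      · simp only [hgdef]
        apply Finset.le_inf'
        intro i hi
        have hin : i ≤ n := Nat.lt_succ_iff.mp (Finset.mem_range.mp hi)
        rcases le_or_gt i j with hij | hij
        · have h1 : A j ≤ h i + L - β * t i := by
            simp only [hA]
            exact Finset.inf'_le _ (Finset.mem_range.mpr (by omega))
          have hti : t i ≤ x := le_trans (tmono i j hij (le_of_lt hj)) hx1
          have hm : min (A j + β * x) (B j - β * x) ≤ A j + β * x := min_le_left _ _
          rw [abs_of_nonneg (by linarith)]; linarith
        · have h1 : B j ≤ h i + L + β * t i := by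
            rw [hBj]
            exact Finset.inf'_le _ (Finset.mem_Icc.mpr ⟨hij, hin⟩)
          have hti : x ≤ t i := le_trans hx2 (tmono (j + 1) i hij hin)
          have hm : min (A j + β * x) (B j - β * x) ≤ B j - β * x := min_le_right _ _
          rw [abs_of_nonpos (by linarith)]; linarith
    set tstar : ℕ → ℝ := fun j => (B j - A j) / (2 * β) with htstar
    have hbrA : ∀ j, j < n → ∀ x, t j ≤ x → x ≤ t (j + 1) → x ≤ tstar j →
        g x = A j + β * x := by
      intro j hj x h1 h2 h3
      rw [hsplit j hj x h1 h2, min_eq_left]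
      have := (le_div_iff₀ (by positivity : (0:ℝ) < 2 * β)).mp h3
      linarith
    have hbrB : ∀ j, j < n → ∀ x, t j ≤ x → x ≤ t (j + 1) → tstar j ≤ x →
        g x = B j - β * x := by
      intro j hj x h1 h2 h3
      rw [hsplit j hj x h1 h2, min_eq_right]
      have := (div_le_iff₀ (by positivity : (0:ℝ) < 2 * β)).mp h3
      linarith
    set c : ℕ → ℝ := fun j => if t j < tstar j ∧ tstar j < t (j + 1) then tstar j
      else (t j + t (j + 1)) / 2 with hc
    have hcb : ∀ j, j < n → t j < c j ∧ c j < t (j + 1) := by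
      intro j hj
      rw [hc]; dsimp only
      by_cases hcase : t j < tstar j ∧ tstar j < t (j + 1)
      · rw [if_pos hcase]; exact hcase
      · rw [if_neg hcase]
        have := ht j hj
        constructor <;> linarith
    refine ⟨2 * n, fun k => if k % 2 = 0 then t (k / 2) else c (k / 2), by norm_num,
      by norm_num, ?_, ?_⟩
    · intro k hk
      rcases Nat.even_or_odd k with ⟨j, rfl⟩ | ⟨j, rfl⟩
      · have e1 : (j + j) % 2 = 0 := by omega
        have e2 : (j + j) / 2 = j := by omega
        have e3 : ¬((j + j + 1) % 2 = 0) := by omega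
        have e4 : (j + j + 1) / 2 = j := by omega
        simp only [e1, e2, e3, e4, if_pos, if_neg, if_true, if_false]
        exact (hcb j (by omega)).1
      · have e1 : ¬((2 * j + 1) % 2 = 0) := by omega
        have e2 : (2 * j + 1) / 2 = j := by omega
        have e3 : (2 * j + 1 + 1) % 2 = 0 := by omega
        have e4 : (2 * j + 1 + 1) / 2 = j + 1 := by omega
        simp only [e1, e2, e3, e4, if_pos, if_neg, if_true, if_false]
        exact (hcb j (by omega)).2
    · intro k hk
      rcases Nat.even_or_odd k with ⟨j, rfl⟩ | ⟨j, rfl⟩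
      · -- even piece [t j, c j]
        have hj : j < n := by omega
        have e1 : (j + j) % 2 = 0 := by omega
        have e2 : (j + j) / 2 = j := by omega
        have e3 : ¬((j + j + 1) % 2 = 0) := by omega
        have e4 : (j + j + 1) / 2 = j := by omega
        simp only [e1, e2, e3, e4, if_pos, if_neg, if_true, if_false]
        obtain ⟨hc1, hc2⟩ := hcb j hj
        by_cases hcase : t j < tstar j ∧ tstar j < t (j + 1)
        · have hcj : c j = tstar j := by rw [hc]; dsimp only; rw [if_pos hcase]
          refine ⟨β, Or.inl rfl, fun x hx => ?_⟩
          obtain ⟨hx1, hx2⟩ := hx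
          rw [hcj] at hx2
          have g1 : g x = A j + β * x :=
            hbrA j hj x hx1 (by linarith [hcase.2]) hx2
          have g2 : g (t j) = A j + β * t j :=
            hbrA j hj (t j) le_rfl (le_of_lt (ht j hj)) (le_of_lt hcase.1)
          rw [g1, g2]; ring
        · have hcj : c j = (t j + t (j + 1)) / 2 := by
            rw [hc]; dsimp only; rw [if_neg hcase]
          rcases le_or_gt (tstar j) (t j) with hside | hside
          · refine ⟨-β, Or.inr rfl, fun x hx => ?_⟩
            obtain ⟨hx1, hx2⟩ := hx
            have g1 : g x = B j - β * x :=
              hbrB j hj x hx1 (by linarith) (by linarith)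
            have g2 : g (t j) = B j - β * t j :=
              hbrB j hj (t j) le_rfl (le_of_lt (ht j hj)) hside
            rw [g1, g2]; ring
          · have hside' : t (j + 1) ≤ tstar j := by
              by_contra hcon
              exact hcase ⟨hside, lt_of_not_ge hcon⟩
            refine ⟨β, Or.inl rfl, fun x hx => ?_⟩
            obtain ⟨hx1, hx2⟩ := hx
            have g1 : g x = A j + β * x :=
              hbrA j hj x hx1 (by linarith) (by linarith)
            have g2 : g (t j) = A j + β * t j :=
              hbrA j hj (t j) le_rfl (le_of_lt (ht j hj)) (by linarith)
            rw [g1, g2]; ring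
      · -- odd piece [c j, t (j+1)]
        have hj : j < n := by omega
        have e1 : ¬((2 * j + 1) % 2 = 0) := by omega
        have e2 : (2 * j + 1) / 2 = j := by omega
        have e3 : (2 * j + 1 + 1) % 2 = 0 := by omega
        have e4 : (2 * j + 1 + 1) / 2 = j + 1 := by omega
        simp only [e1, e2, e3, e4, if_pos, if_neg, if_true, if_false]
        obtain ⟨hc1, hc2⟩ := hcb j hj
        by_cases hcase : t j < tstar j ∧ tstar j < t (j + 1)
        · have hcj : c j = tstar j := by rw [hc]; dsimp only; rw [if_pos hcase]
          refine ⟨-β, Or.inr rfl, fun x hx => ?_⟩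
          obtain ⟨hx1, hx2⟩ := hx
          rw [hcj] at hx1
          have g1 : g x = B j - β * x :=
            hbrB j hj x (by linarith [hcase.1]) hx2 hx1
          have g2 : g (c j) = B j - β * c j := by
            rw [hcj]
            exact hbrB j hj (tstar j) (le_of_lt hcase.1) (le_of_lt hcase.2) le_rfl
          rw [g1, g2, hcj]; ring
        · have hcj : c j = (t j + t (j + 1)) / 2 := by
            rw [hc]; dsimp only; rw [if_neg hcase]
          rcases le_or_gt (tstar j) (t j) with hside | hside
          · refine ⟨-β, Or.inr rfl, fun x hx => ?_⟩
            obtain ⟨hx1, hx2⟩ := hx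
            have g1 : g x = B j - β * x :=
              hbrB j hj x (by linarith) hx2 (by linarith)
            have g2 : g (c j) = B j - β * c j :=
              hbrB j hj (c j) (le_of_lt hc1) (le_of_lt hc2) (by linarith)
            rw [g1, g2]; ring
          · have hside' : t (j + 1) ≤ tstar j := by
              by_contra hcon
              exact hcase ⟨hside, lt_of_not_ge hcon⟩
            refine ⟨β, Or.inl rfl, fun x hx => ?_⟩
            obtain ⟨hx1, hx2⟩ := hx
            have g1 : g x = A j + β * x :=
              hbrA j hj x (by linarith) hx2 (by linarith)
            have g2 : g (c j) = A j + β * c j :=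
              hbrA j hj (c j) (le_of_lt hc1) (le_of_lt hc2) (by linarith)
            rw [g1, g2]; ring

lemma pwl_lipschitz {δ a b : ℝ} {g : ℝ → ℝ} (hδ : 0 ≤ δ)
    (H : PWLinSlope δ a b g) :
    ∀ x y, a ≤ x → x ≤ y → y ≤ b → |g y - g x| ≤ δ * (y - x) := by
  obtain ⟨m, s, hs0, hsm, hmono, hpiece⟩ := H
  subst hs0 hsm
  have key : ∀ k, k ≤ m → ∀ x y, s 0 ≤ x → x ≤ y → y ≤ s k →
      |g y - g x| ≤ δ * (y - x) := by
    intro k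
    induction k with
    | zero =>
      intro _ x y hx hxy hy
      have hxy' : x = y := le_antisymm hxy (hy.trans hx)
      simp [hxy']
    | succ k ih =>
      intro hk x y hx hxy hy
      have hkm : k < m := hk
      obtain ⟨σ, hσ, hform⟩ := hpiece k hkm
      have habs : |σ| = δ := by rcases hσ with rfl | rfl <;> simp [abs_of_nonneg hδ]
      rcases le_or_gt y (s k) with hyk | hyk
      · exact ih (le_of_lt hkm) x y hx hxy hyk
      · have hy1 : g y = g (s k) + σ * (y - s k) := hform y ⟨hyk.le, hy⟩
        rcases le_or_gt (s k) x with hxk | hxk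
        · have hx1 : g x = g (s k) + σ * (x - s k) := hform x ⟨hxk, hxy.trans hy⟩
          have heq : g y - g x = σ * (y - x) := by rw [hy1, hx1]; ring
          rw [heq, abs_mul, habs, abs_of_nonneg (by linarith)]
        · have h1 : |g (s k) - g x| ≤ δ * (s k - x) :=
            ih (le_of_lt hkm) x (s k) hx hxk.le le_rfl
          have h2 : |g y - g (s k)| = δ * (y - s k) := by
            have : g y - g (s k) = σ * (y - s k) := by rw [hy1]; ring
            rw [this, abs_mul, habs, abs_of_nonneg (by linarith)]
          calc |g y - g x| ≤ |g y - g (s k)| + |g (s k) - g x| := abs_sub_le _ _ _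
            _ ≤ δ * (y - s k) + δ * (s k - x) := by rw [h2]; linarith
            _ = δ * (y - x) := by ring
  exact key m le_rfl


/-- if there is a feasible δ-path and 0 ≤ δ ≤ β ≤ α, then
there is a feasible β-path. -/
theorem stmt_3
    (n : ℕ) (hn : 1 ≤ n) (t h : ℕ → ℝ) (α L : ℝ) (f : ℝ → ℝ)
    (hα : 0 < α) (hL : 0 < L)
    (ht : ∀ i < n, t i < t (i + 1))
    (hslope : ∀ i < n,
      h (i + 1) - h i = α * (t (i + 1) - t i) ∨ h (i + 1) - h i = -α * (t (i + 1) - t i))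
    (halt : ∀ i, i + 1 < n → (h (i + 2) - h (i + 1)) * (h (i + 1) - h i) < 0)
    (hf : ∀ i < n, ∀ x ∈ Set.Icc (t i) (t (i + 1)),
      f x = h i + (x - t i) * ((h (i + 1) - h i) / (t (i + 1) - t i)))
    (δ β : ℝ) (hδ : 0 ≤ δ) (hδβ : δ ≤ β) (hβα : β ≤ α)
    (hex : ∃ g : ℝ → ℝ, Feasible (t 0) (t n) L f δ g) :
    ∃ g : ℝ → ℝ, Feasible (t 0) (t n) L f β g := by
  classical
  obtain ⟨g0, hg0p, hg0c⟩ := hex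
  have hβ : 0 ≤ β := hδ.trans hδβ
  have tmono : ∀ i j, i ≤ j → j ≤ n → t i ≤ t j := seq_mono ht
  set g : ℝ → ℝ := fun x => (Finset.range (n + 1)).inf' ⟨0, by simp⟩
      (fun i => h i + L + β * |x - t i|) with hgdef
  -- f (t i) = h i
  have hfi : ∀ i, i ≤ n → f (t i) = h i := by
    intro i hi
    rcases lt_or_eq_of_le hi with hi' | heq
    · have := hf i hi' (t i) ⟨le_rfl, (ht i hi').le⟩
      simpa using this
    · rw [heq]
      have hj' : n - 1 < n := by omega
      have hnn : n - 1 + 1 = n := by omega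
      have hd : t (n - 1) < t n := by
        have := ht (n - 1) hj'; rwa [hnn] at this
      have hne : t n - t (n - 1) ≠ 0 := by linarith
      have := hf (n - 1) hj' (t n) ⟨hd.le, by rw [hnn]⟩
      rw [hnn] at this
      rw [this, mul_comm, div_mul_cancel₀ _ hne]
      ring
  -- corridor inequality from the δ-path
  have hlip := pwl_lipschitz hδ hg0p
  have hcorr : ∀ x ∈ Set.Icc (t 0) (t n), ∀ i, i ≤ n →
      f x - h i ≤ 2 * L + β * |x - t i| := by
    intro x hx i hi
    obtain ⟨hx1, hx2⟩ := hx
    have hti1 : t 0 ≤ t i := tmono 0 i (Nat.zero_le _) hi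
    have hti2 : t i ≤ t n := tmono i n hi le_rfl
    have hmid : |g0 x - g0 (t i)| ≤ δ * |x - t i| := by
      rcases le_total x (t i) with hc | hc
      · have h1 := hlip x (t i) hx1 hc hti2
        rw [abs_sub_comm, abs_of_nonpos (show x - t i ≤ 0 by linarith)]
        linarith [h1]
      · have h1 := hlip (t i) x hti1 hc hx2
        rw [abs_of_nonneg (show (0:ℝ) ≤ x - t i by linarith)]
        linarith [h1]
    have e1 := abs_le.mp (hg0c x ⟨hx1, hx2⟩)
    have e2 := abs_le.mp (hg0c (t i) ⟨hti1, hti2⟩)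
    have e3 := abs_le.mp hmid
    have e4 : δ * |x - t i| ≤ β * |x - t i| :=
      mul_le_mul_of_nonneg_right hδβ (abs_nonneg _)
    have e5 : f (t i) = h i := hfi i hi
    linarith [e1.1, e1.2, e2.1, e2.2, e3.1, e3.2]
  refine ⟨g, aux_pwl n hn t h L β hβ ht, ?_⟩
  intro x hx
  obtain ⟨hx1, hx2⟩ := hx
  -- locate x in a piece
  have hpieceidx : ∀ N, 1 ≤ N → N ≤ n → x ≤ t N → ∃ j, j < N ∧ t j ≤ x ∧ x ≤ t (j + 1) := by
    intro N
    induction N with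
    | zero => omega
    | succ N ih =>
      intro _ hNn hxN
      rcases Nat.eq_or_lt_of_le (Nat.one_le_iff_ne_zero.mpr (by omega) : 1 ≤ N + 1)
        with hN1 | hN1
      · exact ⟨0, by omega, by rwa [← hN1] at *, by rwa [← hN1] at hxN⟩
      · have hN : 1 ≤ N := by omega
        rcases le_or_gt x (t N) with hc | hc
        · obtain ⟨j, hj, hj1, hj2⟩ := ih hN (by omega) hc
          exact ⟨j, by omega, hj1, hj2⟩
        · exact ⟨N, by omega, hc.le, hxN⟩
  obtain ⟨j, hj, hxj1, hxj2⟩ := hpieceidx n hn le_rfl hx2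
  have hΔ : t j < t (j + 1) := ht j hj
  have hΔ0 : t (j + 1) - t j ≠ 0 := by linarith
  have hfx := hf j hj x ⟨hxj1, hxj2⟩
  rw [abs_le]
  constructor
  · -- lower bound : f x - L ≤ g x
    have : f x - L ≤ g x := by
      simp only [hgdef]
      apply Finset.le_inf'
      intro i hi
      have hin : i ≤ n := Nat.lt_succ_iff.mp (Finset.mem_range.mp hi)
      have := hcorr x ⟨hx1, hx2⟩ i hin
      linarith
    linarith
  · -- upper bound : g x ≤ f x + L
    rcases hslope j hj with hs | hs
    · have hsv : (h (j + 1) - h j) / (t (j + 1) - t j) = α := by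
        rw [hs, mul_div_assoc, div_self hΔ0, mul_one]
      rw [hsv] at hfx
      have hle : g x ≤ h j + L + β * |x - t j| := by
        simp only [hgdef]
        exact Finset.inf'_le _ (Finset.mem_range.mpr (by omega))
      rw [abs_of_nonneg (by linarith)] at hle
      have hmul : β * (x - t j) ≤ α * (x - t j) :=
        mul_le_mul_of_nonneg_right hβα (by linarith)
      rw [hfx]
      nlinarith
    · have hsv : (h (j + 1) - h j) / (t (j + 1) - t j) = -α := by
        rw [hs, neg_mul, neg_div, mul_div_assoc, div_self hΔ0, mul_one]
      rw [hsv] at hfx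
      have hle : g x ≤ h (j + 1) + L + β * |x - t (j + 1)| := by
        simp only [hgdef]
        exact Finset.inf'_le _ (Finset.mem_range.mpr (by omega))
      rw [abs_of_nonpos (by linarith)] at hle
      have hmul : β * (t (j + 1) - x) ≤ α * (t (j + 1) - x) :=
        mul_le_mul_of_nonneg_right hβα (by linarith)
      have hh1 : h (j + 1) = h j - α * (t (j + 1) - t j) := by linarith [hs]
      rw [hfx]
      nlinarith
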